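/- Let p ≥ 2 be an integer, let w₀ = (1/p, …, 1/p) ∈ ℝ^p, and let w ∈ ℝ^p be a fixed vector with wᵢ ≥ 0 for all i, Σᵢ wᵢ = 1, and w ≠ w₀. Then Q(w,r) → +∞ as r → 1 from the left (with r ranging in (0,1)); consequently, among all properly weighted group effects, the average group effect defined by w₀ is the only one whose estimator variance remains bounded as r → 1. -/

import Mathlib

open Matrix Filter Topology

/-- The `p × p` Gram/correlation matrix of a uniform model at multicollinearity
level `r`: diagonal entries `1`, off-diagonal entries `r`. -/
noncomputable def unifMat (p : ℕ) (r : ℝ) : Matrix (Fin p) (Fin p) ℝ :=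
  fun i j => if i = j then 1 else r

/-- `Q(w,r) = wᵀ A(p,r)⁻¹ w`. -/
noncomputable def Qform (p : ℕ) (r : ℝ) (w : Fin p → ℝ) : ℝ :=
  w ⬝ᵥ (unifMat p r)⁻¹.mulVec w

/-- Explicit inverse of `unifMat`. -/
noncomputable def unifInv (p : ℕ) (r : ℝ) : Matrix (Fin p) (Fin p) ℝ :=
  fun i j => (if i = j then (1-r)⁻¹ else 0) - r / ((1-r)*(1+((p:ℝ)-1)*r))

lemma unifMat_mul_unifInv (p : ℕ) (r : ℝ) (hr0 : 0 < r) (hr1 : r < 1) :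
    unifMat p r * unifInv p r = 1 := by
  have h1 : (1:ℝ) - r ≠ 0 := by linarith
  have h2 : 1 + ((p:ℝ)-1)*r ≠ 0 := by
    have : (0:ℝ) ≤ (p:ℝ) := Nat.cast_nonneg p
    nlinarith
  have key : ∀ j, (∑ k, unifInv p r k j)
      = (1-r)⁻¹ - p * (r / ((1-r)*(1+((p:ℝ)-1)*r))) := by
    intro j
    simp [unifInv, Finset.sum_sub_distrib, Finset.sum_ite_eq', Finset.card_fin]
  ext i j
  rw [Matrix.mul_apply]
  have hsum : ∀ k : Fin p, (if i = k then (1:ℝ) else r) * unifInv p r k j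
      = r * unifInv p r k j + (if k = i then (1-r) * unifInv p r i j else 0) := by
    intro k
    by_cases h : i = k
    · subst h; rw [if_pos rfl, if_pos rfl]; ring
    · simp [h, Ne.symm h]
  simp only [unifMat, hsum]
  rw [Finset.sum_add_distrib, ← Finset.mul_sum, key j, Finset.sum_ite_eq',
    if_pos (Finset.mem_univ i)]
  by_cases h : i = j
  · subst h
    simp only [unifInv, if_pos rfl, Matrix.one_apply_eq, ↓reduceIte]
    have h2' : 1 + r * ((p:ℝ) - 1) ≠ 0 := by rw [mul_comm]; exact h2
    field_simp
    ring
  · simp only [unifInv, if_neg h, Matrix.one_apply_ne h]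
    have h2' : 1 + r * ((p:ℝ) - 1) ≠ 0 := by rw [mul_comm]; exact h2
    field_simp
    ring

lemma unifMat_inv (p : ℕ) (r : ℝ) (hr0 : 0 < r) (hr1 : r < 1) :
    (unifMat p r)⁻¹ = unifInv p r :=
  Matrix.inv_eq_right_inv (unifMat_mul_unifInv p r hr0 hr1)

lemma Qform_eq (p : ℕ) (r : ℝ) (hr0 : 0 < r) (hr1 : r < 1) (w : Fin p → ℝ)
    (hw1 : (∑ i, w i) = 1) :
    Qform p r w = ((∑ i, w i ^ 2) - r/(1+((p:ℝ)-1)*r)) * (1-r)⁻¹ := by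
  have h1 : (1:ℝ) - r ≠ 0 := by linarith
  have h2 : 1 + ((p:ℝ)-1)*r ≠ 0 := by
    have : (0:ℝ) ≤ (p:ℝ) := Nat.cast_nonneg p
    nlinarith
  have hmv : ∀ i, (unifInv p r).mulVec w i
      = (1-r)⁻¹ * w i - r / ((1-r)*(1+((p:ℝ)-1)*r)) := by
    intro i
    simp only [Matrix.mulVec, dotProduct, unifInv, sub_mul,
      Finset.sum_sub_distrib, ite_mul, zero_mul, Finset.sum_ite_eq,
      if_pos (Finset.mem_univ i), ← Finset.mul_sum, hw1, mul_one]
  rw [Qform, unifMat_inv p r hr0 hr1]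
  simp only [dotProduct, hmv, mul_sub, Finset.sum_sub_distrib,
    ← Finset.sum_mul, hw1, one_mul]
  have : ∑ i, w i * ((1-r)⁻¹ * w i) = (1-r)⁻¹ * ∑ i, w i ^ 2 := by
    rw [Finset.mul_sum]; congr 1; ext i; ring
  rw [this]
  field_simp

theorem variance_diverges_off_average (p : ℕ) (hp : 2 ≤ p) (w : Fin p → ℝ)
    (hw0 : ∀ i, 0 ≤ w i) (hw1 : (∑ i, w i) = 1)
    (hwne : w ≠ fun _ => 1 / (p : ℝ)) :
    Tendsto (fun r : ℝ => Qform p r w) (𝓝[Set.Ioo (0 : ℝ) 1] 1) atTop := by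
  have hp0 : (0:ℝ) < p := by positivity
  have hpne : (p:ℝ) ≠ 0 := ne_of_gt hp0
  set S : ℝ := ∑ i, w i ^ 2 with hS
  -- S - 1/p > 0
  have hSsum : ∑ i, (w i - 1/(p:ℝ))^2 = S - 1/(p:ℝ) := by
    have hcard : (Finset.univ : Finset (Fin p)).card = p := Finset.card_fin p
    have expand : ∀ i, (w i - 1/(p:ℝ))^2 = w i ^ 2 - 2*(1/(p:ℝ))*w i + (1/(p:ℝ))^2 :=
      fun i => by ring
    rw [Finset.sum_congr rfl (fun i _ => expand i), Finset.sum_add_distrib,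
      Finset.sum_sub_distrib, ← Finset.mul_sum, hw1, Finset.sum_const, hcard,
      nsmul_eq_mul]
    field_simp
    ring
  have hSpos : 0 < S - 1/(p:ℝ) := by
    rw [← hSsum]
    obtain ⟨i, hi⟩ : ∃ i, w i ≠ 1/(p:ℝ) := by
      by_contra h
      push_neg at h
      exact hwne (funext h)
    apply Finset.sum_pos' (fun j _ => sq_nonneg _)
    exact ⟨i, Finset.mem_univ i,
      lt_of_le_of_ne (sq_nonneg _) (Ne.symm (pow_ne_zero 2 (sub_ne_zero.mpr hi)))⟩
  -- the numerator tends to S - 1/p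
  have hnum : Tendsto (fun r : ℝ => S - r/(1+((p:ℝ)-1)*r))
      (𝓝[Set.Ioo (0:ℝ) 1] 1) (𝓝 (S - 1/(p:ℝ))) := by
    have hd : (1:ℝ) + ((p:ℝ)-1)*1 ≠ 0 := by
      have : (2:ℝ) ≤ (p:ℝ) := by exact_mod_cast hp
      nlinarith
    have : Tendsto (fun r : ℝ => S - r/(1+((p:ℝ)-1)*r)) (𝓝 1)
        (𝓝 (S - 1/(1+((p:ℝ)-1)*1))) := by
      apply Tendsto.sub tendsto_const_nhds
      exact Tendsto.div tendsto_id
        (tendsto_const_nhds.add (tendsto_const_nhds.mul tendsto_id)) hd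
    have heq : S - 1/(1+((p:ℝ)-1)*1) = S - 1/(p:ℝ) := by ring_nf
    rw [heq] at this
    exact this.mono_left nhdsWithin_le_nhds
  -- (1-r)⁻¹ → atTop
  have hden : Tendsto (fun r : ℝ => (1-r)⁻¹) (𝓝[Set.Ioo (0:ℝ) 1] 1) atTop := by
    apply tendsto_inv_nhdsGT_zero.comp
    apply tendsto_nhdsWithin_of_tendsto_nhds_of_eventually_within
    · have : Tendsto (fun r : ℝ => 1 - r) (𝓝 1) (𝓝 (1-1)) :=
        tendsto_const_nhds.sub tendsto_id
      simpa using this.mono_left nhdsWithin_le_nhds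
    · filter_upwards [self_mem_nhdsWithin] with r hr
      exact sub_pos.mpr hr.2
  have hmul := hnum.pos_mul_atTop hSpos hden
  apply hmul.congr'
  filter_upwards [self_mem_nhdsWithin] with r hr
  exact (Qform_eq p r hr.1 hr.2 w hw1).symm
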